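/- arXiv:2102.10094 — 2 statements merged into one kernel-verified Lean document; each statement's English description precedes it below -/
import Mathlib

section
/- The 2-Dyck language D₂ is not recognizable by any deterministic real-time k-counter automaton, for any k. -/
/-- Counter operations: increment, decrement, no-op, or reset to zero. -/
inductive CounterOp : Type | inc | dec | noop | reset

def CounterOp.apply : CounterOp → ℤ → ℤ
  | .inc, z => z + 1
  | .dec, z => z - 1
  | .noop, z => z
  | .reset, _ => 0

/-- A deterministic real-time `k`-counter automaton: transitions and counter updates
depend on the input symbol, the current state, and the zero-pattern of the counters. -/
structure CounterAutomaton (A Q : Type) (k : ℕ) where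
  start : Q
  step : A → Q → (Fin k → Bool) → Q
  update : A → Q → (Fin k → Bool) → Fin k → CounterOp
  accept : Set (Q × (Fin k → Bool))

namespace CounterAutomaton

variable {A Q : Type} {k : ℕ}

/-- Zero-pattern of a counter vector. -/
def zeros (c : Fin k → ℤ) : Fin k → Bool := fun i => decide (c i = 0)

/-- One step of computation on a configuration (state, counter values). -/
def stepConfig (M : CounterAutomaton A Q k) (cfg : Q × (Fin k → ℤ)) (σ : A) :
    Q × (Fin k → ℤ) :=
  (M.step σ cfg.1 (zeros cfg.2),
    fun i => (M.update σ cfg.1 (zeros cfg.2) i).apply (cfg.2 i))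

/-- The configuration reached after reading a string, starting from the initial state
with all counters zero. -/
def run (M : CounterAutomaton A Q k) (w : List A) : Q × (Fin k → ℤ) :=
  w.foldl M.stepConfig (M.start, fun _ => 0)

/-- The language accepted by a counter automaton. -/
def accepts (M : CounterAutomaton A Q k) : Language A :=
  {w | ((M.run w).1, zeros (M.run w).2) ∈ M.accept}

end CounterAutomaton

/-- Alphabet of two bracket pairs. -/
inductive P2 : Type | op1 | cl1 | op2 | cl2
  deriving DecidableEq

instance instFintypeP2 : Fintype P2 :=
  ⟨{P2.op1, P2.cl1, P2.op2, P2.cl2}, fun x => by cases x <;> simp⟩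

/-- The 2-Dyck language, generated by S → SS | ε | (₁S)₁ | (₂S)₂. -/
inductive Dyck2 : List P2 → Prop
  | eps : Dyck2 []
  | concat {u v : List P2} : Dyck2 u → Dyck2 v → Dyck2 (u ++ v)
  | wrap1 {u : List P2} : Dyck2 u → Dyck2 (P2.op1 :: u ++ [P2.cl1])
  | wrap2 {u : List P2} : Dyck2 u → Dyck2 (P2.op2 :: u ++ [P2.cl2])

namespace Dyck2Aux

lemma exists_big (c K : ℕ) : ∃ n : ℕ, 0 < n ∧ c * (2 * n + 1) ^ K < 2 ^ n := by
  have hs : Summable fun n : ℕ => (n : ℝ) ^ K * (1 / 2 : ℝ) ^ n := by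
    apply summable_pow_mul_geometric_of_norm_lt_one
    rw [Real.norm_eq_abs, abs_of_pos] <;> norm_num
  have ht := hs.tendsto_atTop_zero
  set C : ℕ := c * 3 ^ K with hC
  have hε : (0 : ℝ) < 1 / (C + 1) := by positivity
  have hev := ht.eventually_lt_const hε
  obtain ⟨n, hlt, hn1⟩ := (hev.and (Filter.eventually_ge_atTop 1)).exists
  refine ⟨n, hn1, ?_⟩
  have h2 : ((C : ℝ) + 1) * (n : ℝ) ^ K < 2 ^ n := by
    have hp : (0 : ℝ) < 2 ^ n := by positivity
    rw [div_pow, one_pow, mul_one_div, div_lt_div_iff₀ hp (by positivity)] at hlt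
    nlinarith [hlt]
  have h3 : (C + 1) * n ^ K < 2 ^ n := by
    have := h2
    push_cast at this ⊢
    exact_mod_cast this
  calc c * (2 * n + 1) ^ K ≤ c * (3 * n) ^ K := by
        gcongr; omega
    _ = C * n ^ K := by rw [hC, mul_pow]; ring
    _ < (C + 1) * n ^ K := by
        have : 0 < n ^ K := Nat.pow_pos hn1
        nlinarith
    _ < 2 ^ n := h3

def opener : Bool → P2 | false => .op1 | true => .op2
def closer : Bool → P2 | false => .cl1 | true => .cl2

def scan : List P2 → List Bool → Option (List Bool)
  | [], s => some s
  | .op1 :: w, s => scan w (false :: s)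
  | .op2 :: w, s => scan w (true :: s)
  | .cl1 :: w, false :: s => scan w s
  | .cl2 :: w, true :: s => scan w s
  | .cl1 :: _, _ => none
  | .cl2 :: _, _ => none

lemma scan_append (u v : List P2) (s : List Bool) :
    scan (u ++ v) s = (scan u s).bind (fun s' => scan v s') := by
  induction u generalizing s with
  | nil => simp [scan]
  | cons a u ih =>
    cases a with
    | op1 => simpa [scan] using ih (false :: s)
    | op2 => simpa [scan] using ih (true :: s)
    | cl1 =>
      match s with
      | [] => simp [scan]
      | false :: s' => simpa [scan] using ih s'
      | true :: s' => simp [scan]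
    | cl2 =>
      match s with
      | [] => simp [scan]
      | true :: s' => simpa [scan] using ih s'
      | false :: s' => simp [scan]

lemma dyck_scan {w : List P2} (h : Dyck2 w) : ∀ s, scan w s = some s := by
  induction h with
  | eps => intro s; rfl
  | concat hu hv ihu ihv =>
    intro s
    rw [scan_append, ihu s]
    exact ihv s
  | wrap1 hu ih =>
    intro s
    show scan (_ ++ [P2.cl1]) (false :: s) = some s
    rw [scan_append, ih (false :: s)]
    rfl
  | wrap2 hu ih =>
    intro s
    show scan (_ ++ [P2.cl2]) (true :: s) = some s
    rw [scan_append, ih (true :: s)]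
    rfl

lemma scan_opens (l : List Bool) (s : List Bool) :
    scan (l.map opener) s = some (l.reverse ++ s) := by
  induction l generalizing s with
  | nil => simp [scan]
  | cons a t ih =>
    cases a with
    | false => simpa [scan, opener] using ih (false :: s)
    | true => simpa [scan, opener] using ih (true :: s)

lemma scan_closes {m : List Bool} : ∀ {s : List Bool},
    scan (m.map closer) s = some [] → s = m := by
  induction m with
  | nil => intro s h; simpa [scan] using h.symm
  | cons a t ih =>
    intro s h
    match a, s with
    | false, [] => simp [scan, closer] at h
    | false, false :: s' => exact congrArg (List.cons false) (ih (by simpa [scan, closer] using h))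
    | false, true :: s' => simp [scan, closer] at h
    | true, [] => simp [scan, closer] at h
    | true, true :: s' => exact congrArg (List.cons true) (ih (by simpa [scan, closer] using h))
    | true, false :: s' => simp [scan, closer] at h

def clos (l : List Bool) : List P2 := l.reverse.map closer

lemma dyck_word_clos (l : List Bool) : Dyck2 (l.map opener ++ clos l) := by
  induction l with
  | nil => exact Dyck2.eps
  | cons a t ih =>
    have h : (a :: t).map opener ++ clos (a :: t)
        = opener a :: ((t.map opener ++ clos t) ++ [closer a]) := by
      simp [clos]
    rw [h]
    cases a with
    | false => exact Dyck2.wrap1 ih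
    | true => exact Dyck2.wrap2 ih

lemma clos_unique {l l' : List Bool} (h : Dyck2 (l'.map opener ++ clos l)) : l' = l := by
  have h1 := dyck_scan h []
  rw [scan_append, scan_opens] at h1
  simp only [List.append_nil, Option.bind_some] at h1
  have := scan_closes (m := l.reverse) h1
  simpa using congrArg List.reverse this

open CounterAutomaton in
lemma counter_bound {Q : Type} {k : ℕ} (M : CounterAutomaton P2 Q k) :
    ∀ (w : List P2) (cfg : Q × (Fin k → ℤ)) (m : ℕ), (∀ i, |cfg.2 i| ≤ (m : ℤ)) →
      ∀ i, |(w.foldl M.stepConfig cfg).2 i| ≤ ((m + w.length : ℕ) : ℤ) := by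
  intro w
  induction w with
  | nil => intro cfg m h i; simpa using h i
  | cons a w ih =>
    intro cfg m h i
    have hstep : ∀ j, |(M.stepConfig cfg a).2 j| ≤ ((m + 1 : ℕ) : ℤ) := by
      intro j
      have := h j
      cases hop : M.update a cfg.1 (zeros cfg.2) j with
      | inc => simp only [stepConfig, hop, CounterOp.apply]
               push_cast
               calc |cfg.2 j + 1| ≤ |cfg.2 j| + 1 := abs_add_le _ _
                 _ ≤ (m : ℤ) + 1 := by linarith
      | dec => simp only [stepConfig, hop, CounterOp.apply]
               push_cast
               calc |cfg.2 j - 1| ≤ |cfg.2 j| + 1 := abs_sub _ _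
                 _ ≤ (m : ℤ) + 1 := by linarith
      | noop => simp only [stepConfig, hop, CounterOp.apply]
                push_cast; linarith
      | reset => simp only [stepConfig, hop, CounterOp.apply]
                 push_cast
                 simp only [abs_zero]
                 positivity
    have := ih (M.stepConfig cfg a) (m + 1) hstep i
    simpa [Nat.add_assoc, Nat.add_comm 1 w.length] using this

end Dyck2Aux

open Dyck2Aux CounterAutomaton

/-- The 2-Dyck language is not recognized by any deterministic real-time `k`-counter
automaton, for any `k`. -/
theorem dyck2_not_counter_recognizable :
    ¬ ∃ (k : ℕ) (Q : Type) (_ : Fintype Q) (M : CounterAutomaton P2 Q k),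
        M.accepts = {w : List P2 | Dyck2 w} := by
  rintro ⟨k, Q, instQ, M, hM⟩
  obtain ⟨n, hn1, hbig⟩ := exists_big (Fintype.card Q) k
  -- the word of opens for a bit-vector
  set wrd : (Fin n → Bool) → List P2 := fun b => (List.ofFn b).map opener with hwrd
  have hlen : ∀ b, (wrd b).length = n := by intro b; simp [hwrd]
  have hbound : ∀ (b : Fin n → Bool) (i : Fin k), |(M.run (wrd b)).2 i| ≤ (n : ℤ) := by
    intro b i
    have := counter_bound M (wrd b) (M.start, fun _ => 0) 0 (by intro j; simp) i
    simpa [CounterAutomaton.run, hlen b] using this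
  -- injection into bounded configurations
  set F : (Fin n → Bool) → Q × (Fin k → Set.Icc (-(n : ℤ)) (n : ℤ)) := fun b =>
    ((M.run (wrd b)).1, fun i => ⟨(M.run (wrd b)).2 i, by
      rw [Set.mem_Icc, ← abs_le]; exact hbound b i⟩) with hF
  have hinj : Function.Injective F := by
    intro b b' hfb
    have hrun : M.run (wrd b) = M.run (wrd b') := by
      have h1 := congrArg Prod.fst hfb
      have h2 := congrArg Prod.snd hfb
      simp only [hF] at h1 h2
      refine Prod.ext h1 (funext fun i => ?_)
      exact congrArg Subtype.val (congrFun h2 i)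
    -- same run ⇒ same acceptance on all extensions
    have hext : ∀ v, M.run (wrd b ++ v) = M.run (wrd b' ++ v) := by
      intro v
      simp only [CounterAutomaton.run, List.foldl_append]
      rw [show (wrd b).foldl M.stepConfig (M.start, fun _ => 0) = M.run (wrd b) from rfl,
        show (wrd b').foldl M.stepConfig (M.start, fun _ => 0) = M.run (wrd b') from rfl, hrun]
    set v := clos (List.ofFn b) with hv
    have hmem : wrd b ++ v ∈ M.accepts := by
      rw [hM]
      exact dyck_word_clos (List.ofFn b)
    have hmem' : wrd b' ++ v ∈ M.accepts := by
      show ((M.run (wrd b' ++ v)).1, zeros (M.run (wrd b' ++ v)).2) ∈ M.accept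
      rw [← hext v]
      exact hmem
    rw [hM] at hmem'
    have hofn : List.ofFn b' = List.ofFn b := clos_unique hmem'
    exact (List.ofFn_injective hofn).symm
  have hcard := Fintype.card_le_of_injective F hinj
  have htoNat : ((n : ℤ) + 1 - -(n : ℤ)).toNat = 2 * n + 1 := by omega
  simp only [Fintype.card_prod, Fintype.card_fun, Fintype.card_Icc, Int.card_Icc, htoNat,
    Fintype.card_bool, Fintype.card_fin] at hcard
  exact absurd hcard (not_le.mpr hbig)
end

section
/- If f : Σ* → ℚ is computed by a weighted finite automaton over the rational field with r states, then the Hankel matrix of f has rank at most r. -/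
/-- A weighted finite automaton over a semiring `K`, with alphabet `A` and states `Q`:
initial weights, transition weights, and final weights. -/
structure WFA (K A Q : Type) where
  init : Q → K
  tr : Q → A → Q → K

  fin : Q → K

namespace WFA

variable {K A Q : Type} [Semiring K] [Fintype Q]

/-- Forward weight vector after reading a string (sum over all paths). -/
def vec (M : WFA K A Q) (w : List A) : Q → K :=
  w.foldl (fun v σ => fun q' => ∑ q, v q * M.tr q σ q') M.init

/-- The weight a WFA assigns to a string: the sum over all paths consuming the string of
the product of the initial weight, the transition weights, and the final weight. -/
def weight (M : WFA K A Q) (w : List A) : K := ∑ q, M.vec w q * M.fin q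

/-- Backward weight vector. -/
def back (M : WFA K A Q) : List A → Q → K
  | [], q => M.fin q
  | σ :: w, q => ∑ q', M.tr q σ q' * M.back w q'

lemma foldl_back (M : WFA K A Q) (v : List A) :
    ∀ x : Q → K,
      (∑ q, (v.foldl (fun v σ => fun q' => ∑ q, v q * M.tr q σ q') x) q * M.fin q)
        = ∑ q, x q * M.back v q := by
  induction v with
  | nil => intro x; simp [back]
  | cons σ v ih =>
      intro x
      rw [List.foldl_cons, ih]
      simp only [back, Finset.sum_mul, Finset.mul_sum]
      rw [Finset.sum_comm]
      simp [mul_assoc]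

lemma weight_append (M : WFA K A Q) (u v : List A) :
    M.weight (u ++ v) = ∑ q, M.vec u q * M.back v q := by
  simpa [weight, vec, List.foldl_append] using M.foldl_back v (M.vec u)

end WFA

/-- If `f` is computed by a rational WFA with `r` states, then the Hankel matrix of `f`
has rank at most `r`: every finite submatrix (rows indexed by prefixes, columns by
suffixes, entries `f (prefix ++ suffix)`) has rank at most `r`. -/
theorem hankel_rank_le_states (A : Type) [Fintype A] (f : List A → ℚ)
    (Q : Type) [Fintype Q] (M : WFA ℚ A Q) (hM : ∀ w, M.weight w = f w)
    (m n : ℕ) (rows : Fin m → List A) (cols : Fin n → List A) :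
    Matrix.rank (Matrix.of fun i j => f (rows i ++ cols j)) ≤ Fintype.card Q := by
  have hfac : (Matrix.of fun i j => f (rows i ++ cols j)) =
      (Matrix.of fun i q => M.vec (rows i) q) * (Matrix.of fun q j => M.back (cols j) q) := by
    ext i j
    simp [Matrix.mul_apply, ← hM, M.weight_append]
  rw [hfac]
  exact le_trans (Matrix.rank_mul_le_left _ _) (Matrix.rank_le_card_width _)
end
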